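/- Let k ≥ 1 and let G be a star of size n ≥ 2 with a marked k-tuple ḡ of pairwise distinct vertices (k ≤ n). Then for every d ≥ 0, any two unmarked vertices of G are ∼_d-equivalent; in particular, if the center is unmarked then the center is ∼_d-equivalent to every unmarked leaf. Consequently, for every d the number of ∼_d-equivalence classes is at most k + 1. -/

import Mathlib

/-! Markings of topologies with a marked k-tuple, following the paper's
`d`-contraction construction. -/

noncomputable def dst {α : Type} (l : List α) : List α :=
  @List.destutter α (· ≠ ·) (fun _ _ => Classical.dec _) l

/-- A topology: a finite nonempty directed graph with no self-loops. -/
structure Topo where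
  V : Type
  fintypeV : Fintype V
  decEqV : DecidableEq V
  nonemptyV : Nonempty V
  E : V → V → Prop
  no_self_loops : ∀ v, ¬ E v v

attribute [instance] Topo.fintypeV Topo.decEqV Topo.nonemptyV

/-- `Mark k d`: the type of `d`-th markings (independent of the topology). -/
def Mark (k : ℕ) : ℕ → Type
  | 0 => Finset (Fin k)
  | d + 1 => Set (List (Mark k d))

def Mark.toSet {k d : ℕ} (m : Mark k (d + 1)) : Set (List (Mark k d)) := m

/-- The labeling `Λ`: `Λ (g i) = {i}` and `Λ v = ∅` for unmarked `v`
(for injective `g`). -/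
def lab {k : ℕ} (G : Topo) (g : Fin k → G.V) (v : G.V) : Finset (Fin k) :=
  Finset.univ.filter fun i => g i = v

/-- `InX G g v π`: `π` is a directed path starting at `v`, ending at a marked
vertex, with all non-final vertices unmarked.  (The set `X(v)` of the paper.) -/
def InX {k : ℕ} (G : Topo) (g : Fin k → G.V) (v : G.V) (π : List G.V) : Prop :=
  π ≠ [] ∧ π.head? = some v ∧ List.Chain' G.E π ∧
    (∀ u ∈ π.dropLast, u ∉ Set.range g) ∧
    ∃ w ∈ Set.range g, π.getLast? = some w

/-- The `d`-th marking `μ_d`. -/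
noncomputable def mu {k : ℕ} (G : Topo) (g : Fin k → G.V) : (d : ℕ) → G.V → Mark k d
  | 0, v => lab G g v
  | d + 1, v => { s : List (Mark k d) | ∃ π : List G.V, InX G g v π ∧ s = dst (π.map (mu G g d)) }

/-- A star of size `n ≥ 2`: the center is `0 : Fin n`, the leaves are the other
vertices; there are edges `(0, l)` and `(l, 0)` for every leaf `l` and no
other edges. -/
def starTopo (n : ℕ) (hn : 2 ≤ n) : Topo :=
  haveI : NeZero n := ⟨by omega⟩
  { V := Fin n
    fintypeV := inferInstance
    decEqV := inferInstance
    nonemptyV := ⟨0⟩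
    E := fun i j => i ≠ j ∧ (i = 0 ∨ j = 0)
    no_self_loops := fun _ h => h.1 rfl }

section Aux

lemma dst_aux' {α : Type} (m x : α) :
    ∀ L : List α, (∀ a ∈ L, a = m) →
      @List.destutter' α (· ≠ ·) (fun _ _ => Classical.dec _) m (L ++ [x]) =
      @List.destutter' α (· ≠ ·) (fun _ _ => Classical.dec _) m [x] := by
  intro L
  induction L with
  | nil => intro _; rfl
  | cons a L ih =>
    intro h
    have ha : a = m := h a (List.mem_cons_self)
    have hmm : ¬ (m ≠ m) := by simp
    rw [List.cons_append, ha, List.destutter'_cons, if_neg hmm]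
    exact ih (fun b hb => h b (List.mem_cons_of_mem _ hb))

lemma dst_const_concat {α : Type} (m x : α) (L : List α) (hL : L ≠ [])
    (h : ∀ a ∈ L, a = m) : dst (L ++ [x]) = dst [m, x] := by
  obtain ⟨a, L', rfl⟩ := List.exists_cons_of_ne_nil hL
  have ha : a = m := h a (List.mem_cons_self)
  unfold dst
  rw [ha, List.cons_append, List.destutter_cons', List.destutter_cons']
  exact dst_aux' m x L' (fun b hb => h b (List.mem_cons_of_mem _ hb))

lemma star_unmarked_eq {k n : ℕ} (hn : 2 ≤ n) (g : Fin k → Fin n) :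
    ∀ d : ℕ, ∀ u v : Fin n, u ∉ Set.range g → v ∉ Set.range g →
      mu (starTopo n hn) g d u = mu (starTopo n hn) g d v := by
  haveI : NeZero n := ⟨by omega⟩
  intro d
  induction d with
  | zero =>
    intro u v hu hv
    show lab (starTopo n hn) g u = lab (starTopo n hn) g v
    unfold lab
    ext i
    simp only [Finset.mem_filter, Finset.mem_univ, true_and]
    constructor
    · intro h; exact absurd ⟨i, h⟩ hu
    · intro h; exact absurd ⟨i, h⟩ hv
  | succ d ih =>
    suffices hsub : ∀ u v : Fin n, u ∉ Set.range g → v ∉ Set.range g →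
        Mark.toSet (mu (starTopo n hn) g (d+1) u) ⊆
          Mark.toSet (mu (starTopo n hn) g (d+1) v) by
      intro u v hu hv
      exact Set.Subset.antisymm (hsub u v hu hv) (hsub v u hv hu)
    intro u v hu hv s hs
    simp only [Mark.toSet, mu, Set.mem_setOf_eq] at hs ⊢
    obtain ⟨π, hπ, rfl⟩ := hs
    obtain ⟨hne, hhead, hchain, hdrop, w, hwmem, hlast⟩ := hπ
    have hw : w = π.getLast hne := by
      rw [List.getLast?_eq_getLast hne] at hlast
      exact (Option.some_injective _ hlast).symm
    have hπeq : π = π.dropLast ++ [w] := by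
      rw [hw]; exact (List.dropLast_append_getLast hne).symm
    have huw : u ≠ w := by
      intro h; exact hu (h ▸ hwmem)
    have hq : π.dropLast ≠ [] := by
      intro h
      have hπw : π = [w] := by rw [hπeq, h]; rfl
      rw [hπw] at hhead
      simp only [List.head?_cons, Option.some.injEq] at hhead
      exact huw (Option.some_injective _ hhead).symm
    set m := mu (starTopo n hn) g d u with hm
    have hvm : mu (starTopo n hn) g d v = m := ih v u hv hu
    have hmap : ∀ b ∈ (π.dropLast).map (mu (starTopo n hn) g d), b = m := by
      intro b hb
      obtain ⟨a, ha, rfl⟩ := List.mem_map.1 hb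
      exact ih a u (hdrop a ha) hu
    have hs2 : dst (π.map (mu (starTopo n hn) g d)) =
        dst [m, mu (starTopo n hn) g d w] := by
      conv_lhs => rw [hπeq]
      rw [List.map_append]
      refine dst_const_concat m _ _ ?_ hmap
      intro hcon
      exact hq (List.map_eq_nil_iff.1 hcon)
    by_cases hw0 : w = (0 : Fin n)
    · -- the center is marked; use the path [v, w]
      have hvw : v ≠ w := fun h => hv (h ▸ hwmem)
      refine ⟨[v, w], ⟨by simp, rfl, ?_, ?_, w, hwmem, rfl⟩, ?_⟩
      · exact List.isChain_cons_cons.2 ⟨⟨hvw, Or.inr hw0⟩, List.isChain_singleton _⟩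
      · intro a ha
        replace ha : a = v := List.mem_singleton.1 ha
        exact ha ▸ hv
      · rw [hs2]
        exact congrArg (fun x => dst [x, mu (starTopo n hn) g d w]) hvm.symm
    · -- w is a leaf; the center lies in π.dropLast, so it is unmarked
      have hEq : (starTopo n hn).E (π.dropLast.getLast hq) w := by
        have hc := hchain
        rw [hπeq] at hc; replace hc := List.isChain_append.1 hc
        exact hc.2.2 _ (List.getLast?_eq_getLast hq) w rfl
      have h0q : π.dropLast.getLast hq = (0 : Fin n) := by
        rcases hEq.2 with h | h
        · exact h
        · exact absurd h hw0
      have h0mem : (0 : Fin n) ∈ π.dropLast := h0q ▸ List.getLast_mem hq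
      have h0un : (0 : Fin n) ∉ Set.range g := hdrop (0 : Fin n) h0mem
      have h0m : mu (starTopo n hn) g d (0 : Fin n) = m := ih 0 u h0un hu
      have hvw : v ≠ w := fun h => hv (h ▸ hwmem)
      by_cases hv0 : v = (0 : Fin n)
      · refine ⟨[v, w], ⟨by simp, rfl, ?_, ?_, w, hwmem, rfl⟩, ?_⟩
        · exact List.isChain_cons_cons.2 ⟨⟨hvw, Or.inl hv0⟩, List.isChain_singleton _⟩
        · intro a ha
          replace ha : a = v := List.mem_singleton.1 ha
          exact ha ▸ hv
        · rw [hs2]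
          exact congrArg (fun x => dst [x, mu (starTopo n hn) g d w]) hvm.symm
      · refine ⟨[v, (0 : Fin n), w], ⟨by simp, rfl, ?_, ?_, w, hwmem, rfl⟩, ?_⟩
        · refine List.isChain_cons_cons.2 ⟨⟨hv0, Or.inr rfl⟩, ?_⟩
          exact List.isChain_cons_cons.2 ⟨⟨fun h => hw0 h.symm, Or.inl rfl⟩,
            List.isChain_singleton _⟩
        · intro a ha
          replace ha : a = v ∨ a = (0 : Fin n) := by
            rcases List.mem_cons.1 ha with h | h
            · exact Or.inl h
            · exact Or.inr (List.mem_singleton.1 h)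
          rcases ha with rfl | rfl
          · exact hv
          · exact h0un
        · rw [hs2]
          refine Eq.trans ?_ (congrArg dst (congrArg₂ List.cons hvm (congrArg₂ List.cons h0m rfl))).symm
          exact (dst_const_concat m (mu (starTopo n hn) g d w) [m, m]
            (by simp) (by simp)).symm

end Aux

/-- in a star of size `n`, any two unmarked vertices are
`∼_d`-equivalent for every `d` (in particular an unmarked center is equivalent
to every unmarked leaf), and there are at most `k + 1` classes of `∼_d`. -/
theorem stmt10 {k n : ℕ} (hk : 1 ≤ k) (hn : 2 ≤ n) (hkn : k ≤ n)
    (g : Fin k → Fin n) (hg : Function.Injective g) (d : ℕ) :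
    (∀ u v : Fin n, u ∉ Set.range g → v ∉ Set.range g →
      mu (starTopo n hn) g d u = mu (starTopo n hn) g d v) ∧
    ((⟨0, by omega⟩ : Fin n) ∉ Set.range g →
      ∀ v : Fin n, v ≠ ⟨0, by omega⟩ → v ∉ Set.range g →
        mu (starTopo n hn) g d ⟨0, by omega⟩ = mu (starTopo n hn) g d v) ∧
    (Set.range (mu (starTopo n hn) g d)).ncard ≤ k + 1 := by
  haveI : NeZero n := ⟨by omega⟩
  refine ⟨star_unmarked_eq hn g d, ?_, ?_⟩
  · intro h0un v _ hvun
    exact star_unmarked_eq hn g d _ v h0un hvun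
  · set f := mu (starTopo n hn) g d with hf
    have hsub : Set.range f ⊆
        (Set.range fun i : Fin k => f (g i)) ∪ (f '' {v : Fin n | v ∉ Set.range g}) := by
      rintro y ⟨v, rfl⟩
      by_cases hv : v ∈ Set.range g
      · obtain ⟨i, rfl⟩ := hv
        exact Or.inl ⟨i, rfl⟩
      · exact Or.inr ⟨v, hv, rfl⟩
    have h1 : (Set.range fun i : Fin k => f (g i)).ncard ≤ k := by
      rw [← Set.image_univ]
      calc ((fun i : Fin k => f (g i)) '' Set.univ).ncard
          ≤ (Set.univ : Set (Fin k)).ncard := Set.ncard_image_le (Set.finite_univ)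
        _ = k := by rw [Set.ncard_univ]; simp
    have h2 : (f '' {v : Fin n | v ∉ Set.range g}).ncard ≤ 1 := by
      rcases Set.eq_empty_or_nonempty ({v : Fin n | v ∉ Set.range g}) with he | ⟨v0, hv0⟩
      · exact ((congrArg Set.ncard (Set.image_eq_empty.2 he)).trans (Set.ncard_empty _)).le.trans zero_le_one
      · have hss : f '' {v : Fin n | v ∉ Set.range g} ⊆ {f v0} := by
          rintro y ⟨v, hv, rfl⟩
          exact star_unmarked_eq hn g d v v0 hv hv0
        calc (f '' {v : Fin n | v ∉ Set.range g}).ncard ≤ ({f v0} : Set _).ncard :=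
              Set.ncard_le_ncard hss (Set.finite_singleton _)
          _ = 1 := Set.ncard_singleton _
    calc (Set.range f).ncard
        ≤ ((Set.range fun i : Fin k => f (g i)) ∪ (f '' {v : Fin n | v ∉ Set.range g})).ncard :=
          Set.ncard_le_ncard hsub (Set.Finite.union (Set.finite_range _)
            ((Set.toFinite _).image _))
      _ ≤ (Set.range fun i : Fin k => f (g i)).ncard + (f '' {v : Fin n | v ∉ Set.range g}).ncard :=
          Set.ncard_union_le _ _
      _ ≤ k + 1 := Nat.add_le_add h1 h2
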